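/- For every real a with 0 < a < 1, the improper integral lim_{R→∞} ∫_{-R}^{R} e^{-iu} |u|^{-a} du exists and equals 2 Γ(1-a) sin(πa/2); in particular it is a nonzero complex (in fact positive real) number. -/

import Mathlib

open MeasureTheory Filter Real

namespace Stmt1Aux

open Set

/-- integrability of `t^(a-1) * exp(-(r t))` on `Ioi 0`. -/
lemma integrableOn_rpow_exp {a : ℝ} (ha : 0 < a) {r : ℝ} (hr : 0 < r) :
    IntegrableOn (fun t : ℝ => t ^ (a - 1) * Real.exp (-(r * t))) (Ioi 0) := by
  have h : IntegrableOn (fun x : ℝ => Real.exp (-x) * x ^ (a - 1)) (Ioi 0) :=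
    Real.GammaIntegral_convergent ha
  have h2 : IntegrableOn (fun t : ℝ => Real.exp (-(r * t)) * (r * t) ^ (a - 1)) (Ioi 0) := by
    have := (integrableOn_Ioi_comp_mul_left_iff
      (fun x : ℝ => Real.exp (-x) * x ^ (a - 1)) 0 hr).mpr (by simpa using h)
    simpa using this
  have h3 : IntegrableOn (fun t : ℝ => Real.exp (-(r * t)) * (r * t) ^ (a - 1) * r ^ (1 - a)) (Ioi 0) := h2.mul_const (r ^ (1 - a))
  refine h3.congr_fun (fun t ht => ?_) measurableSet_Ioi
  rw [mem_Ioi] at ht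
  beta_reduce
  rw [Real.mul_rpow hr.le ht.le]
  rw [show rexp (-(r * t)) * (r ^ (a-1) * t ^ (a-1)) * r ^ (1-a)
      = t ^ (a-1) * rexp (-(r * t)) * (r ^ (a-1) * r^(1-a)) by ring, ← Real.rpow_add hr]
  simp

/-- The explicit value of `∫ t in Ioi 0, t^(a-1) * exp (-(r*t))`. -/
lemma integral_rpow_exp {a : ℝ} (ha : 0 < a) {r : ℝ} (hr : 0 < r) :
    ∫ t in Ioi (0:ℝ), t ^ (a - 1) * Real.exp (-(r * t)) = r ^ (-a) * Real.Gamma a := by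
  rw [Real.integral_rpow_mul_exp_neg_mul_Ioi ha hr, one_div, Real.inv_rpow hr.le,
    ← Real.rpow_neg hr.le]


lemma hasDerivAt_aux (t u : ℝ) :
    HasDerivAt (fun u : ℝ => Real.exp (-(t*u)) * (Real.sin u - t * Real.cos u) / (1 + t^2))
      (Real.exp (-(t*u)) * Real.cos u) u := by
  have h1 : HasDerivAt (fun u : ℝ => Real.exp (-(t*u))) (-t * Real.exp (-(t*u))) u := by
    have : HasDerivAt (fun u : ℝ => -(t*u)) (-t) u := by
      simpa using ((hasDerivAt_id u).const_mul t).fun_neg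
    simpa [mul_comm] using this.exp
  have h2 : HasDerivAt (fun u : ℝ => Real.sin u - t * Real.cos u)
      (Real.cos u + t * Real.sin u) u := by
    simpa [mul_comm] using (Real.hasDerivAt_sin u).fun_sub ((Real.hasDerivAt_cos u).const_mul t)
  have h3 := (h1.fun_mul h2).div_const (1 + t^2)
  refine h3.congr_deriv ?_
  have ht : (1 : ℝ) + t^2 ≠ 0 := by positivity
  field_simp
  ring

lemma inner_eval (t R : ℝ) :
    ∫ u in (0:ℝ)..R, Real.exp (-(t*u)) * Real.cos u
      = (Real.exp (-(t*R)) * (Real.sin R - t * Real.cos R) + t) / (1 + t^2) := by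
  have h := intervalIntegral.integral_eq_sub_of_hasDerivAt (a := 0) (b := R)
    (f := fun u : ℝ => Real.exp (-(t*u)) * (Real.sin u - t * Real.cos u) / (1 + t^2))
    (f' := fun u => Real.exp (-(t*u)) * Real.cos u)
    (fun u _ => hasDerivAt_aux t u) ?_
  · rw [h]
    simp
    ring
  · apply Continuous.intervalIntegrable
    continuity


lemma beta_real {p : ℝ} (hp : 0 < p) (hp1 : p < 1) :
    ∫ x in (0:ℝ)..1, x ^ (p - 1) * (1 - x) ^ ((1 - p) - 1) = π / Real.sin (π * p) := by
  have hq : 0 < 1 - p := by linarith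
  have hbeta := Complex.Gamma_mul_Gamma_eq_betaIntegral
    (s := (p : ℂ)) (t := ((1 - p : ℝ) : ℂ)) (by simpa using hp) (by simpa using hq)
  have hsum : (p : ℂ) + ((1 - p : ℝ) : ℂ) = 1 := by push_cast; ring
  rw [hsum, Complex.Gamma_one, one_mul] at hbeta
  have hrefl : Complex.Gamma (p : ℂ) * Complex.Gamma ((1 - p : ℝ) : ℂ)
      = (π : ℂ) / Complex.sin (π * p) := by
    have := Complex.Gamma_mul_Gamma_one_sub (p : ℂ)
    rw [show ((1 - p : ℝ) : ℂ) = 1 - (p : ℂ) by push_cast; ring]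
    simpa using this
  -- betaIntegral equals the real integral
  have hcongr : Complex.betaIntegral (p : ℂ) ((1 - p : ℝ) : ℂ)
      = ((∫ x in (0:ℝ)..1, x ^ (p - 1) * (1 - x) ^ ((1 - p) - 1) : ℝ) : ℂ) := by
    rw [Complex.betaIntegral, ← intervalIntegral.integral_ofReal]
    refine intervalIntegral.integral_congr_ae ?_
    have h1 : ∀ᵐ x : ℝ, x ∈ Set.uIoc (0:ℝ) 1 → x ∈ Ioo (0:ℝ) 1 := by
      have : (Set.uIoc (0:ℝ) 1 : Set ℝ) = Ioc 0 1 := by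
        rw [uIoc_of_le (by norm_num)]
      rw [this]
      filter_upwards [compl_mem_ae_iff.mpr (volume_singleton (a := (1:ℝ)))] with x hx hx2
      exact ⟨hx2.1, lt_of_le_of_ne hx2.2 (by simpa using hx)⟩
    filter_upwards [h1] with x hx hx2
    obtain ⟨h0, h1'⟩ := hx hx2
    rw [show ((p:ℂ) - 1) = ((p - 1 : ℝ) : ℂ) by push_cast; ring,
      show (((1-p:ℝ):ℂ) - 1) = (((1-p) - 1 : ℝ) : ℂ) by push_cast; ring,
      ← Complex.ofReal_cpow h0.le, ← Complex.ofReal_one, ← Complex.ofReal_sub,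
      ← Complex.ofReal_cpow (by linarith), ← Complex.ofReal_mul]
  rw [hcongr, hrefl] at hbeta
  have hsin : Complex.sin ((π : ℂ) * (p:ℂ)) = ((Real.sin (π * p) : ℝ) : ℂ) := by
    rw [Complex.ofReal_sin]; push_cast; ring_nf
  rw [hsin, ← Complex.ofReal_div] at hbeta
  exact_mod_cast hbeta.symm

lemma C_eq {a : ℝ} (ha0 : 0 < a) (ha1 : a < 1) :
    ∫ t in Ioi (0:ℝ), t ^ a / (1 + t ^ 2) = π / (2 * Real.cos (π * a / 2)) := by
  -- change of variables t = sqrt (x / (1-x)) on Ioo 0 1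
  set φ : ℝ → ℝ := fun x => Real.sqrt (x / (1 - x)) with hφ
  set φ' : ℝ → ℝ := fun x => 1 / (2 * Real.sqrt (x / (1 - x))) * (1 / (1 - x) ^ 2) with hφ'
  have hderiv : ∀ x ∈ Ioo (0:ℝ) 1, HasDerivAt φ (φ' x) x := by
    intro x hx
    have hx1 : (0:ℝ) < 1 - x := by linarith [hx.2]
    have h1 : HasDerivAt (fun x : ℝ => x / (1 - x)) (1 / (1 - x) ^ 2) x := by
      have := (hasDerivAt_id x).fun_div ((hasDerivAt_id x).const_sub 1) (by positivity)
      refine this.congr_deriv ?_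
      simp only [id]
      field_simp
      ring
    have hs : x / (1 - x) ≠ 0 := by
      have : 0 < x / (1 - x) := div_pos hx.1 hx1
      exact this.ne'
    exact (Real.hasDerivAt_sqrt hs).comp x h1
  have hmono : StrictMonoOn (fun x : ℝ => x / (1 - x)) (Ioo 0 1) := by
    intro x hx y hy hxy
    rw [div_lt_div_iff₀ (by linarith [hx.2]) (by linarith [hy.2])]
    nlinarith [hx.1, hy.1]
  have hinj : InjOn φ (Ioo 0 1) := by
    intro x hx y hy hxy
    have h1 : Real.sqrt (x / (1 - x)) = Real.sqrt (y / (1 - y)) := hxy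
    have hx0 : 0 ≤ x / (1 - x) := le_of_lt (div_pos hx.1 (by linarith [hx.2]))
    have hy0 : 0 ≤ y / (1 - y) := le_of_lt (div_pos hy.1 (by linarith [hy.2]))
    have h2 : x / (1 - x) = y / (1 - y) := by
      have := congrArg (fun z : ℝ => z ^ 2) h1
      simpa [Real.sq_sqrt hx0, Real.sq_sqrt hy0] using this
    exact hmono.injOn hx hy h2
  have himg : φ '' Ioo 0 1 = Ioi 0 := by
    ext t
    constructor
    · rintro ⟨x, hx, rfl⟩
      exact Real.sqrt_pos.mpr (div_pos hx.1 (by linarith [hx.2]))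
    · intro ht
      rw [mem_Ioi] at ht
      refine ⟨t ^ 2 / (1 + t ^ 2), ⟨by positivity, ?_⟩, ?_⟩
      · rw [div_lt_one (by positivity)]; nlinarith
      · have h1 : (1:ℝ) - t ^ 2 / (1 + t ^ 2) = 1 / (1 + t ^ 2) := by
          field_simp
          ring
        simp only [hφ, h1]
        rw [show t ^ 2 / (1 + t ^ 2) / (1 / (1 + t ^ 2)) = t ^ 2 by
          field_simp]
        exact Real.sqrt_sq ht.le
  have hchg := integral_image_eq_integral_abs_deriv_smul measurableSet_Ioo
    (fun x hx => (hderiv x hx).hasDerivWithinAt) hinj (fun t => t ^ a / (1 + t ^ 2))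
  rw [himg] at hchg
  have hp0 : 0 < (a + 1) / 2 := by linarith
  have hp1 : (a + 1) / 2 < 1 := by linarith
  have key : ∀ x ∈ Ioo (0:ℝ) 1, |φ' x| • (φ x ^ a / (1 + φ x ^ 2))
      = (1/2) * (x ^ ((a+1)/2 - 1) * (1 - x) ^ ((1 - (a+1)/2) - 1)) := by
    intro x hx
    have hx0 : 0 < x := hx.1
    have hx1 : (0:ℝ) < 1 - x := by linarith [hx.2]
    have hs : 0 < x / (1 - x) := div_pos hx0 hx1
    have h2 : φ x ^ 2 = x / (1 - x) := Real.sq_sqrt hs.le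
    have h3 : 1 + φ x ^ 2 = 1 / (1 - x) := by rw [h2]; field_simp; ring
    have hsqrt : φ x = x ^ (1/2 : ℝ) / (1 - x) ^ (1/2 : ℝ) := by
      rw [hφ]
      simp only [Real.sqrt_eq_rpow]
      exact Real.div_rpow hx0.le hx1.le _
    have hpow : φ x ^ a = x ^ (a/2 : ℝ) / (1 - x) ^ (a/2 : ℝ) := by
      show Real.sqrt (x / (1 - x)) ^ a = _
      rw [Real.sqrt_eq_rpow, ← Real.rpow_mul hs.le,
        show (1/2 : ℝ) * a = a / 2 by ring]
      exact Real.div_rpow hx0.le hx1.le _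
    have hx12 : x ^ ((a+1)/2 - 1) = x ^ (a/2 : ℝ) / x ^ (1/2 : ℝ) := by
      rw [show (a+1)/2 - 1 = a/2 - 1/2 by ring, Real.rpow_sub hx0]
    have hx13 : (1 - x) ^ ((1 - (a+1)/2) - 1)
        = 1 / ((1 - x) ^ (a/2 : ℝ) * (1 - x) ^ (1/2 : ℝ)) := by
      rw [show (1 - (a+1)/2) - 1 = -(a/2 + 1/2) by ring, Real.rpow_neg hx1.le,
        Real.rpow_add hx1]
      ring
    have hA : 0 < x ^ (1/2 : ℝ) := Real.rpow_pos_of_pos hx0 _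
    have hB : 0 < x ^ (a/2 : ℝ) := Real.rpow_pos_of_pos hx0 _
    have hC : 0 < (1 - x) ^ (1/2 : ℝ) := Real.rpow_pos_of_pos hx1 _
    have hD : 0 < (1 - x) ^ (a/2 : ℝ) := Real.rpow_pos_of_pos hx1 _
    have hφ'pos : 0 ≤ φ' x := by
      rw [hφ']
      positivity
    have hφ'eq : φ' x = 1 / (2 * (x ^ (1/2 : ℝ) / (1 - x) ^ (1/2 : ℝ))) * (1 / (1 - x) ^ 2) := by
      show 1 / (2 * Real.sqrt (x / (1 - x))) * (1 / (1 - x) ^ 2) = _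
      rw [Real.sqrt_eq_rpow, Real.div_rpow hx0.le hx1.le]
    have hsq : (1 - x) ^ ((1:ℝ)/2) * (1 - x) ^ ((1:ℝ)/2) = 1 - x := by
      rw [← Real.rpow_add hx1]
      norm_num
    rw [smul_eq_mul, abs_of_nonneg hφ'pos, hφ'eq, h3, hpow, hx12, hx13]
    field_simp
    linear_combination hsq
  rw [hchg, setIntegral_congr_fun measurableSet_Ioo key]
  rw [← MeasureTheory.integral_Ioc_eq_integral_Ioo,
    ← intervalIntegral.integral_of_le (by norm_num : (0:ℝ) ≤ 1)]
  rw [intervalIntegral.integral_const_mul, beta_real hp0 hp1]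
  have hcos : Real.sin (π * ((a+1)/2)) = Real.cos (π * a / 2) := by
    rw [show π * ((a+1)/2) = π * a / 2 + π / 2 by ring]
    exact Real.sin_add_pi_div_two _
  rw [hcos]
  have hcpos : 0 < Real.cos (π * a / 2) := by
    apply Real.cos_pos_of_mem_Ioo
    constructor <;> [nlinarith [Real.pi_pos]; nlinarith [Real.pi_pos]]
  field_simp


lemma meas_aux {a : ℝ} : Measurable fun z : ℝ × ℝ =>
    Real.cos z.1 * (z.2 ^ (a - 1) * Real.exp (-(z.1 * z.2))) := by
  fun_prop

lemma F_eq {a : ℝ} (ha0 : 0 < a) (ha1 : a < 1) {R : ℝ} (hR : 0 < R) :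
    ∫ u in Ioc 0 R, Real.cos u * u ^ (-a)
      = (Real.Gamma a)⁻¹ * ∫ t in Ioi 0, t ^ (a - 1) *
          ((Real.exp (-(t*R)) * (Real.sin R - t * Real.cos R) + t) / (1 + t^2)) := by
  have hG : 0 < Real.Gamma a := Real.Gamma_pos_of_pos ha0
  set f : ℝ → ℝ → ℝ := fun u t => Real.cos u * (t ^ (a - 1) * Real.exp (-(u * t))) with hf
  -- integrability on the product
  have hmeas : AEStronglyMeasurable (fun z : ℝ × ℝ => f z.1 z.2)
      ((volume.restrict (Ioc 0 R)).prod (volume.restrict (Ioi 0))) :=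
    meas_aux.aestronglyMeasurable
  have hx_int : IntegrableOn (fun u : ℝ => u ^ (-a)) (Ioc 0 R) := by
    have h := intervalIntegral.intervalIntegrable_rpow' (a := 0) (b := R) (r := -a) (by linarith)
    exact (intervalIntegrable_iff_integrableOn_Ioc_of_le hR.le).mp h
  have hslice : ∀ u ∈ Ioc (0:ℝ) R, Integrable (fun t => f u t) (volume.restrict (Ioi 0)) := by
    intro u hu
    exact (integrableOn_rpow_exp ha0 hu.1).const_mul _
  have hnormval : ∀ u ∈ Ioc (0:ℝ) R,
      (∫ t in Ioi (0:ℝ), ‖f u t‖) = |Real.cos u| * (u ^ (-a) * Real.Gamma a) := by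
    intro u hu
    have : ∀ t ∈ Ioi (0:ℝ), ‖f u t‖ = |Real.cos u| * (t ^ (a-1) * Real.exp (-(u * t))) := by
      intro t ht
      rw [mem_Ioi] at ht
      rw [hf]
      simp only [norm_mul, Real.norm_eq_abs]
      rw [abs_of_nonneg (Real.rpow_nonneg ht.le _), abs_of_nonneg (Real.exp_pos _).le]
    rw [setIntegral_congr_fun measurableSet_Ioi this, integral_const_mul,
      integral_rpow_exp ha0 hu.1]
  have hprod : Integrable (fun z : ℝ × ℝ => f z.1 z.2)
      ((volume.restrict (Ioc 0 R)).prod (volume.restrict (Ioi 0))) := by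
    rw [integrable_prod_iff hmeas]
    constructor
    · filter_upwards [ae_restrict_mem measurableSet_Ioc] with u hu
      exact hslice u hu
    · have hb : Integrable (fun u : ℝ => |Real.cos u| * (u ^ (-a) * Real.Gamma a))
          (volume.restrict (Ioc 0 R)) := by
        apply Integrable.bdd_mul (c := 1) (hx_int.mul_const _)
        · exact (measurable_cos.abs).aestronglyMeasurable
        · exact ae_of_all _ (fun x => by rw [Real.norm_eq_abs, abs_abs]; exact Real.abs_cos_le_one x)
      apply hb.congr
      filter_upwards [ae_restrict_mem measurableSet_Ioc] with u hu
      exact (hnormval u hu).symm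
  -- step 1 : replace integrand
  have step1 : ∫ u in Ioc 0 R, Real.cos u * u ^ (-a)
      = ∫ u in Ioc 0 R, (Real.Gamma a)⁻¹ * ∫ t in Ioi 0, f u t := by
    refine setIntegral_congr_fun measurableSet_Ioc (fun u hu => ?_)
    rw [hf]
    simp only
    rw [integral_const_mul, integral_rpow_exp ha0 hu.1]
    field_simp
  rw [step1, integral_const_mul]
  congr 1
  rw [integral_integral_swap hprod]
  refine setIntegral_congr_fun measurableSet_Ioi (fun t ht => ?_)
  rw [mem_Ioi] at ht
  have : ∫ u in Ioc 0 R, f u t = t ^ (a-1) * ∫ u in Ioc 0 R, Real.exp (-(t*u)) * Real.cos u := by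
    rw [← integral_const_mul]
    refine setIntegral_congr_fun measurableSet_Ioc (fun u hu => ?_)
    rw [hf]
    simp only
    rw [mul_comm u t]
    ring
  rw [this, ← intervalIntegral.integral_of_le hR.le, inner_eval t R]


lemma integrable_lim {a : ℝ} (ha0 : 0 < a) (ha1 : a < 1) :
    IntegrableOn (fun t : ℝ => t ^ a / (1 + t ^ 2)) (Ioi 0) := by
  have hmeas : Measurable fun t : ℝ => t ^ a / (1 + t ^ 2) := by fun_prop
  have h1 : IntegrableOn (fun t : ℝ => t ^ a / (1 + t ^ 2)) (Ioc 0 1) := by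
    apply Integrable.mono' (integrable_const (1:ℝ))
    · exact hmeas.aestronglyMeasurable.restrict
    · filter_upwards [ae_restrict_mem measurableSet_Ioc] with t ht
      rw [Real.norm_eq_abs, abs_div, abs_of_nonneg (Real.rpow_nonneg ht.1.le _),
        abs_of_pos (by positivity : (0:ℝ) < 1 + t^2)]
      have h2 : t ^ a ≤ 1 := Real.rpow_le_one ht.1.le ht.2 ha0.le
      have h3 : (1:ℝ) ≤ 1 + t^2 := by nlinarith
      calc t ^ a / (1 + t^2) ≤ t ^ a := by
            apply div_le_self (Real.rpow_nonneg ht.1.le _) h3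
        _ ≤ 1 := h2
  have h2 : IntegrableOn (fun t : ℝ => t ^ a / (1 + t ^ 2)) (Ioi 1) := by
    apply Integrable.mono' (integrableOn_Ioi_rpow_of_lt (by linarith : a - 2 < -1) one_pos)
    · exact hmeas.aestronglyMeasurable.restrict
    · filter_upwards [ae_restrict_mem measurableSet_Ioi] with t ht
      rw [mem_Ioi] at ht
      have ht0 : (0:ℝ) < t := by linarith
      rw [Real.norm_eq_abs, abs_div, abs_of_nonneg (Real.rpow_nonneg ht0.le _),
        abs_of_pos (by positivity : (0:ℝ) < 1 + t^2)]
      rw [div_le_iff₀ (by positivity)]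
      have h4 : t ^ (a - 2) * t ^ (2:ℕ) = t ^ a := by
        rw [← Real.rpow_natCast t 2, ← Real.rpow_add ht0]
        norm_num
      nlinarith [h4, Real.rpow_pos_of_pos ht0 (a - 2)]
  have := h1.union h2
  rwa [Ioc_union_Ioi_eq_Ioi (by norm_num : (0:ℝ) ≤ 1)] at this

lemma err_ptwise_bound {a : ℝ} {R t : ℝ} (ht : 0 < t) :
    ‖t ^ (a - 1) * (Real.exp (-(t*R)) * (Real.sin R - t * Real.cos R) / (1 + t^2))‖
      ≤ 2 * (t ^ (a - 1) * Real.exp (-(R * t))) := by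
  have h1 : |Real.sin R - t * Real.cos R| ≤ 1 + t := by
    calc |Real.sin R - t * Real.cos R| ≤ |Real.sin R| + |t * Real.cos R| := abs_sub _ _
      _ ≤ 1 + t := by
          have := Real.abs_sin_le_one R
          have h2 : |t * Real.cos R| ≤ t := by
            rw [abs_mul, abs_of_pos ht]
            nlinarith [Real.abs_cos_le_one R]
          linarith
  have h2 : (1 + t) / (1 + t^2) ≤ 2 := by
    rw [div_le_iff₀ (by positivity)]
    nlinarith
  rw [Real.norm_eq_abs, abs_mul, abs_of_nonneg (Real.rpow_nonneg ht.le _), abs_div,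
    abs_mul, abs_of_pos (Real.exp_pos _), abs_of_pos (by positivity : (0:ℝ) < 1 + t^2),
    mul_comm t R]
  have hrp := Real.rpow_nonneg ht.le (a - 1)
  have hexp := (Real.exp_pos (-(R*t))).le
  calc t ^ (a-1) * (Real.exp (-(R*t)) * |Real.sin R - t * Real.cos R| / (1 + t^2))
      ≤ t ^ (a-1) * (Real.exp (-(R*t)) * (1 + t) / (1 + t^2)) := by
        apply mul_le_mul_of_nonneg_left _ hrp
        gcongr
    _ ≤ t ^ (a-1) * (Real.exp (-(R*t)) * 2) := by
        apply mul_le_mul_of_nonneg_left _ hrp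
        rw [mul_div_assoc]
        exact mul_le_mul_of_nonneg_left h2 hexp
    _ = 2 * (t ^ (a-1) * Real.exp (-(R*t))) := by ring

lemma integrable_err {a : ℝ} (ha0 : 0 < a) (ha1 : a < 1) {R : ℝ} (hR : 0 < R) :
    IntegrableOn (fun t : ℝ => t ^ (a - 1) *
      (Real.exp (-(t*R)) * (Real.sin R - t * Real.cos R) / (1 + t^2))) (Ioi 0) := by
  apply Integrable.mono' ((integrableOn_rpow_exp ha0 hR).const_mul 2)
  · apply Measurable.aestronglyMeasurable
    fun_prop
  · filter_upwards [ae_restrict_mem measurableSet_Ioi] with t ht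
    exact err_ptwise_bound ht

lemma err_bound {a : ℝ} (ha0 : 0 < a) (ha1 : a < 1) {R : ℝ} (hR : 0 < R) :
    ‖∫ t in Ioi (0:ℝ), t ^ (a - 1) *
        (Real.exp (-(t*R)) * (Real.sin R - t * Real.cos R) / (1 + t^2))‖
      ≤ 2 * (R ^ (-a) * Real.Gamma a) := by
  have h := norm_integral_le_of_norm_le ((integrableOn_rpow_exp ha0 hR).const_mul 2)
    (by filter_upwards [ae_restrict_mem measurableSet_Ioi] with t ht
        exact err_ptwise_bound ht)
  rwa [integral_const_mul, integral_rpow_exp ha0 hR] at h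

/-- Main real limit. -/
lemma main_tendsto {a : ℝ} (ha0 : 0 < a) (ha1 : a < 1) :
    Tendsto (fun R : ℝ => ∫ u in Ioc 0 R, Real.cos u * u ^ (-a)) atTop
      (nhds (Real.Gamma (1 - a) * Real.sin (π * a / 2))) := by
  have hG : 0 < Real.Gamma a := Real.Gamma_pos_of_pos ha0
  have hcpos : 0 < Real.cos (π * a / 2) := by
    apply Real.cos_pos_of_mem_Ioo
    constructor <;> nlinarith [Real.pi_pos]
  have hspos : 0 < Real.sin (π * a / 2) := by
    apply Real.sin_pos_of_pos_of_lt_pi <;> nlinarith [Real.pi_pos]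
  -- the limit value
  have hval : (Real.Gamma a)⁻¹ * (π / (2 * Real.cos (π * a / 2)))
      = Real.Gamma (1 - a) * Real.sin (π * a / 2) := by
    have hrefl : Real.Gamma a * Real.Gamma (1 - a) = π / Real.sin (π * a) :=
      Real.Gamma_mul_Gamma_one_sub a
    have hsin : Real.sin (π * a) = 2 * Real.sin (π * a / 2) * Real.cos (π * a / 2) := by
      rw [show π * a = 2 * (π * a / 2) by ring, Real.sin_two_mul]
      ring
    have hsinpos : 0 < Real.sin (π * a) := by rw [hsin]; positivity
    rw [hsin] at hrefl
    field_simp at hrefl ⊢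
    have hs' : Real.sin (a * π / 2) ≠ 0 := by rw [mul_comm a π]; exact hspos.ne'
    have hc' : Real.cos (a * π / 2) ≠ 0 := by rw [mul_comm a π]; exact hcpos.ne'
    rw [eq_div_iff (mul_ne_zero hs' hc')] at hrefl
    rw [div_eq_iff hc']
    nlinarith [hrefl]
  rw [← hval]
  -- difference bound
  have key : ∀ R : ℝ, 0 < R →
      ‖(∫ u in Ioc 0 R, Real.cos u * u ^ (-a))
        - (Real.Gamma a)⁻¹ * (π / (2 * Real.cos (π * a / 2)))‖
        ≤ (Real.Gamma a)⁻¹ * (2 * (R ^ (-a) * Real.Gamma a)) := by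
    intro R hR
    rw [F_eq ha0 ha1 hR, ← C_eq ha0 ha1]
    have hsplit : ∫ t in Ioi (0:ℝ), t ^ (a - 1) *
        ((Real.exp (-(t*R)) * (Real.sin R - t * Real.cos R) + t) / (1 + t^2))
        = (∫ t in Ioi (0:ℝ), t ^ a / (1 + t ^ 2))
          + ∫ t in Ioi (0:ℝ), t ^ (a - 1) *
              (Real.exp (-(t*R)) * (Real.sin R - t * Real.cos R) / (1 + t^2)) := by
      rw [← integral_add (integrable_lim ha0 ha1) (integrable_err ha0 ha1 hR)]
      refine setIntegral_congr_fun measurableSet_Ioi (fun t ht => ?_)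
      rw [mem_Ioi] at ht
      have hta : t ^ a = t ^ (a - 1) * t := by
        rw [← Real.rpow_add_one ht.ne' (a - 1), sub_add_cancel]
      rw [hta]
      field_simp
      ring
    rw [hsplit, mul_add, add_sub_cancel_left, norm_mul, norm_inv, Real.norm_eq_abs,
      abs_of_pos hG]
    exact mul_le_mul_of_nonneg_left (err_bound ha0 ha1 hR) (inv_nonneg.mpr hG.le)
  -- squeeze
  rw [tendsto_iff_norm_sub_tendsto_zero]
  apply squeeze_zero' (g := fun R : ℝ => (Real.Gamma a)⁻¹ * (2 * (R ^ (-a) * Real.Gamma a)))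
  · filter_upwards with R using norm_nonneg _
  · filter_upwards [eventually_gt_atTop (0:ℝ)] with R hR using key R hR
  · have h1 : Tendsto (fun R : ℝ => R ^ (-a)) atTop (nhds 0) :=
      tendsto_rpow_neg_atTop ha0
    have := (((h1.mul_const (Real.Gamma a)).const_mul 2).const_mul (Real.Gamma a)⁻¹)
    simpa using this


lemma symm_reduce {a : ℝ} (ha0 : 0 < a) (ha1 : a < 1) {R : ℝ} (hR : 0 < R) :
    ∫ u in Set.Icc (-R) R,
        Complex.exp (-(Complex.I * (u : ℂ))) * ((|u| ^ (-a) : ℝ) : ℂ)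
      = ((2 * ∫ u in Ioc 0 R, Real.cos u * u ^ (-a) : ℝ) : ℂ) := by
  set f : ℝ → ℂ := fun u => Complex.exp (-(Complex.I * (u : ℂ))) * ((|u| ^ (-a) : ℝ) : ℂ)
    with hf
  have hmeas : Measurable f := by fun_prop
  have hnorm : ∀ u : ℝ, ‖f u‖ = |u| ^ (-a) := by
    intro u
    rw [hf]
    simp only [norm_mul, Complex.norm_exp]
    have : (-(Complex.I * (u : ℂ))).re = 0 := by simp
    rw [this, Real.exp_zero, one_mul, Complex.norm_real, Real.norm_eq_abs,
      abs_of_nonneg (Real.rpow_nonneg (abs_nonneg u) _)]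
  -- interval integrability on [0, R]
  have hIpos : IntervalIntegrable f volume 0 R := by
    rw [intervalIntegrable_iff_integrableOn_Ioc_of_le hR.le]
    apply Integrable.mono'
      ((intervalIntegrable_iff_integrableOn_Ioc_of_le hR.le).mp
        (intervalIntegral.intervalIntegrable_rpow' (by linarith : (-1:ℝ) < -a)))
    · exact hmeas.aestronglyMeasurable.restrict
    · filter_upwards [ae_restrict_mem measurableSet_Ioc] with u hu
      rw [hnorm u, abs_of_pos hu.1]
  have hIneg : IntervalIntegrable f volume (-R) 0 := by
    rw [IntervalIntegrable.iff_comp_neg]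
    simp only [neg_neg, neg_zero]
    apply IntervalIntegrable.symm
    rw [intervalIntegrable_iff_integrableOn_Ioc_of_le hR.le]
    apply Integrable.mono'
      ((intervalIntegrable_iff_integrableOn_Ioc_of_le hR.le).mp
        (intervalIntegral.intervalIntegrable_rpow' (by linarith : (-1:ℝ) < -a)))
    · exact (hmeas.comp measurable_neg).aestronglyMeasurable.restrict
    · filter_upwards [ae_restrict_mem measurableSet_Ioc] with u hu
      rw [hnorm (-u), abs_neg, abs_of_pos hu.1]
  have step1 : ∫ u in Set.Icc (-R) R, f u = ∫ u in (-R)..R, f u := by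
    rw [intervalIntegral.integral_of_le (by linarith), ← integral_Icc_eq_integral_Ioc]
  have step2 : ∫ u in (-R)..R, f u = (∫ u in (-R)..0, f u) + ∫ u in (0:ℝ)..R, f u :=
    (intervalIntegral.integral_add_adjacent_intervals hIneg hIpos).symm
  have step3 : ∫ u in (-R)..0, f u = ∫ u in (0:ℝ)..R, f (-u) := by
    rw [intervalIntegral.integral_comp_neg fun u => f u]
    simp
  have step4 : (∫ u in (0:ℝ)..R, f (-u)) + ∫ u in (0:ℝ)..R, f u
      = ∫ u in (0:ℝ)..R, ((2 * (Real.cos u * |u| ^ (-a)) : ℝ) : ℂ) := by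
    have hcomp : IntervalIntegrable (fun u => f (-u)) volume 0 R := by
      have h := (IntervalIntegrable.iff_comp_neg (by simp)).mp hIneg
      simp only [neg_neg, neg_zero] at h
      exact h.symm
    rw [← intervalIntegral.integral_add hcomp hIpos]
    refine intervalIntegral.integral_congr (fun u hu => ?_)
    rw [hf]
    simp only
    rw [abs_neg, Complex.ofReal_neg, mul_neg, neg_neg, ← add_mul]
    rw [show Complex.I * (u:ℂ) = (u:ℂ) * Complex.I by ring, Complex.exp_mul_I,
      ← neg_mul, Complex.exp_mul_I]
    push_cast
    simp [Complex.cos_ofReal_re, Complex.sin_neg, Complex.cos_neg]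
    ring
  rw [step1, step2, step3, step4, intervalIntegral.integral_ofReal]
  norm_cast
  rw [intervalIntegral.integral_const_mul, intervalIntegral.integral_of_le hR.le]
  congr 1
  refine setIntegral_congr_fun measurableSet_Ioc (fun u hu => ?_)
  rw [abs_of_pos hu.1]

end Stmt1Aux

/-- For `0 < a < 1` the improper integral
`lim_{R→∞} ∫_{-R}^R e^{-iu} |u|^{-a} du` exists and equals `2 Γ(1-a) sin(πa/2)`,
which is a positive real number. -/
theorem stmt1 (a : ℝ) (ha0 : 0 < a) (ha1 : a < 1) :
    Tendsto (fun R : ℝ =>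
        ∫ u in Set.Icc (-R) R,
          Complex.exp (-(Complex.I * (u : ℂ))) * ((|u| ^ (-a) : ℝ) : ℂ))
      atTop
      (nhds ((2 * Real.Gamma (1 - a) * Real.sin (π * a / 2) : ℝ) : ℂ)) ∧
    0 < 2 * Real.Gamma (1 - a) * Real.sin (π * a / 2) := by
  have hspos : 0 < Real.sin (π * a / 2) := by
    apply Real.sin_pos_of_pos_of_lt_pi <;> nlinarith [Real.pi_pos]
  have hGpos : 0 < Real.Gamma (1 - a) := Real.Gamma_pos_of_pos (by linarith)
  constructor
  · have h := Stmt1Aux.main_tendsto ha0 ha1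
    have h2 : Tendsto (fun R : ℝ =>
        ((2 * ∫ u in Set.Ioc 0 R, Real.cos u * u ^ (-a) : ℝ) : ℂ)) atTop
        (nhds ((2 * Real.Gamma (1 - a) * Real.sin (π * a / 2) : ℝ) : ℂ)) := by
      apply Tendsto.comp (Complex.continuous_ofReal.tendsto _)
      have := h.const_mul 2
      convert this using 2
      ring
    apply h2.congr'
    filter_upwards [eventually_gt_atTop (0:ℝ)] with R hR
    exact (Stmt1Aux.symm_reduce ha0 ha1 hR).symm
  · positivity
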